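/- With σ_n defined by the Newton-type recursion σ_{n+1} = (c − σ_n²)(2σ_1)^{−1} + σ_n, the sequence {σ_n} satisfies: for all n ≥ k, m^k divides σ_n − σ_k; hence {σ_n} is a Cauchy sequence in the m-adic metric. -/

import Mathlib

noncomputable def mnorm (m : ℕ) (q : ℚ) : ℝ :=
  if q = 0 then 0 else (m : ℝ) ^ (-(m.maxPowDiv q.num.natAbs : ℤ))

noncomputable def mdist (m : ℕ) (x y : ℚ) : ℝ := mnorm m (x - y)

theorem newton_seq_cauchy (m : ℕ) (hm : 3 ≤ m) (hodd : Odd m) (c t : ℤ)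
    (hc : IsCoprime c (m : ℤ)) (σ : ℕ → ℤ)
    (h1 : σ 1 ^ 2 ≡ c [ZMOD (m : ℤ)])
    (ht : 2 * σ 1 * t ≡ 1 [ZMOD (m : ℤ)])
    (hrec : ∀ n, 1 ≤ n → σ (n + 1) = (c - σ n ^ 2) * t + σ n) :
    (∀ k n, 1 ≤ k → k ≤ n → (m : ℤ) ^ k ∣ σ n - σ k) ∧
    (∀ ε : ℝ, 0 < ε → ∃ N, ∀ p q, N ≤ p → N ≤ q →
      mdist m ((σ p : ℚ)) ((σ q : ℚ)) < ε) := by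
  have key : ∀ n, 1 ≤ n → ((m:ℤ)^n ∣ c - σ n ^ 2 ∧ (m:ℤ) ∣ σ n - σ 1) := by
    intro n hn
    induction n with
    | zero => omega
    | succ n ih =>
      by_cases h0 : n = 0
      · subst h0
        refine ⟨?_, by simp⟩
        have := h1.dvd
        simpa using this
      · have hn1 : 1 ≤ n := by omega
        obtain ⟨hA, hB⟩ := ih hn1
        have hσ : σ (n+1) = (c - σ n ^ 2) * t + σ n := hrec n hn1
        have hmd : (m:ℤ) ∣ c - σ n ^ 2 :=
          dvd_trans (dvd_pow_self (m:ℤ) (by omega)) hA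
        constructor
        · have hexp : c - σ (n+1)^2 =
              (c - σ n ^ 2) * (1 - 2 * σ n * t) - (c - σ n ^ 2)^2 * t^2 := by
            rw [hσ]; ring
          have hmod : (m:ℤ) ∣ 1 - 2 * σ n * t := by
            have h1t : (m:ℤ) ∣ 1 - 2 * σ 1 * t := ht.dvd
            have : 1 - 2 * σ n * t = (1 - 2 * σ 1 * t) - 2 * t * (σ n - σ 1) := by ring
            rw [this]
            exact dvd_sub h1t (Dvd.dvd.mul_left hB (2*t))
          rw [hexp]
          refine dvd_sub ?_ ?_
          · rw [pow_succ]
            exact mul_dvd_mul hA hmod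
          · refine dvd_trans (pow_dvd_pow (m:ℤ) (by omega : n+1 ≤ 2*n)) ?_
            have h2 : ((m:ℤ)^n)^2 ∣ (c - σ n ^ 2)^2 := pow_dvd_pow_of_dvd hA 2
            rw [← pow_mul] at h2
            rw [show 2*n = n*2 by ring]
            exact h2.mul_right _
        · have : σ (n+1) - σ 1 = (c - σ n ^ 2) * t + (σ n - σ 1) := by rw [hσ]; ring
          rw [this]
          exact dvd_add (hmd.mul_right t) hB
  have part1 : ∀ k n, 1 ≤ k → k ≤ n → (m : ℤ) ^ k ∣ σ n - σ k := by
    intro k n hk hkn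
    induction n, hkn using Nat.le_induction with
    | base => simp
    | succ n hn ih =>
      have hn1 : 1 ≤ n := le_trans hk hn
      have hσ : σ (n+1) = (c - σ n ^ 2) * t + σ n := hrec n hn1
      have : σ (n+1) - σ k = (c - σ n ^ 2) * t + (σ n - σ k) := by rw [hσ]; ring
      rw [this]
      refine dvd_add ?_ ih
      exact ((dvd_trans (pow_dvd_pow (m:ℤ) hn) (key n hn1).1).mul_right t)
  refine ⟨part1, ?_⟩
  intro ε hε
  have hm1R : (1:ℝ) < (m:ℝ) := by exact_mod_cast (by omega : 1 < m)
  have hmpos : (0:ℝ) < m := by linarith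
  obtain ⟨N₀, hN₀⟩ := exists_pow_lt_of_lt_one hε
    (show (1/(m:ℝ)) < 1 by rw [div_lt_one hmpos]; linarith)
  refine ⟨max N₀ 1, ?_⟩
  intro p q hp hq
  unfold mdist mnorm
  split
  · exact hε
  · rename_i hne
    set N := max N₀ 1 with hN
    have hNle : ∀ {a b : ℕ}, N ≤ a → N ≤ b → (m:ℤ)^N ∣ σ a - σ b := by
      intro a b ha hb
      have h1a : 1 ≤ a := le_trans (le_max_right _ _) ha
      have h1b : 1 ≤ b := le_trans (le_max_right _ _) hb
      rcases le_total a b with h | h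
      · have h' := dvd_trans (pow_dvd_pow (m:ℤ) ha) (part1 a b h1a h)
        rw [show σ a - σ b = -(σ b - σ a) by ring]
        exact dvd_neg.mpr h'
      · exact dvd_trans (pow_dvd_pow (m:ℤ) hb) (part1 b a h1b h)
    have hdvd : (m:ℤ)^N ∣ σ p - σ q := hNle hp hq
    have hnum : ((σ p : ℚ) - (σ q : ℚ)).num = σ p - σ q := by
      rw [show ((σ p:ℚ) - (σ q:ℚ)) = ((σ p - σ q : ℤ):ℚ) by push_cast; ring,
        Rat.num_intCast]
    have hne0 : (σ p - σ q : ℤ) ≠ 0 := by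
      intro h
      apply hne
      have : ((σ p : ℚ) - σ q) = ((σ p - σ q : ℤ) : ℚ) := by push_cast; ring
      rw [this, h]; simp
    have hdvdN : m^N ∣ (σ p - σ q : ℤ).natAbs := by
      have := Int.natAbs_dvd_natAbs.mpr hdvd
      simpa [Int.natAbs_pow] using this
    have hle : N ≤ m.maxPowDiv ((σ p : ℚ) - σ q).num.natAbs := by
      rw [hnum]
      exact (Nat.pow_dvd_iff_le_padicValNat (by omega : m ≠ 1) (Int.natAbs_ne_zero.mpr hne0)).mp hdvdN
    calc (m:ℝ) ^ (-(m.maxPowDiv ((σ p:ℚ) - σ q).num.natAbs : ℤ))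
        ≤ (m:ℝ) ^ (-(N:ℤ)) := by
          apply zpow_le_zpow_right₀ (le_of_lt hm1R)
          omega
      _ = (1/(m:ℝ))^N := by
          rw [one_div, inv_pow, ← zpow_natCast, ← zpow_neg]
      _ ≤ (1/(m:ℝ))^N₀ := by
          apply pow_le_pow_of_le_one (by positivity) (by rw [div_le_one hmpos]; linarith)
          exact le_max_left _ _
      _ < ε := hN₀
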